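/- Let H be a Hilbert space, F : U → ℝ C¹ on a neighborhood U of 0, and G : O → ℝ C¹ on a neighborhood O. Suppose x ∈ U and y_t := Π_K(x) + t∇F(x) ∈ O for all t ∈ [0,1], with Φ(y₁) = x, G(y_t) = F(Φ(y_t)), and ‖∇G(y_t)‖ ≤ C‖∇F(x)‖ for all t. Then |F(x) - G(Π_K(x))| ≤ C‖∇F(x)‖². -/

import Mathlib

/-- (almost-Łojasiewicz estimate) With `y_t = Π_K(x) + t∇F(x) ∈ O` for
`t ∈ [0,1]`, `Φ(y₁) = x`, `G(y_t) = F(Φ(y_t))`, `G` differentiable along the path with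
gradient `∇G`, and `‖∇G(y_t)‖ ≤ C‖∇F(x)‖`, one has `|F(x) - G(Π_K(x))| ≤ C‖∇F(x)‖²`. -/
theorem stmt11 {H : Type*} [NormedAddCommGroup H] [InnerProductSpace ℝ H] [CompleteSpace H]
    (O : Set H) (F G : H → ℝ) (gF gG : H → H) (PK : H → H) (Φ : H → H)
    (C : ℝ) (hC : 0 < C) (x : H)
    (hyt : ∀ t ∈ Set.Icc (0 : ℝ) 1, PK x + t • gF x ∈ O)
    (hΦ : Φ (PK x + gF x) = x)
    (hGF : ∀ t ∈ Set.Icc (0 : ℝ) 1, G (PK x + t • gF x) = F (Φ (PK x + t • gF x)))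
    (hgG : ∀ t ∈ Set.Icc (0 : ℝ) 1,
      HasFDerivAt G (innerSL ℝ (gG (PK x + t • gF x))) (PK x + t • gF x))
    (hbound : ∀ t ∈ Set.Icc (0 : ℝ) 1, ‖gG (PK x + t • gF x)‖ ≤ C * ‖gF x‖) :
    |F x - G (PK x)| ≤ C * ‖gF x‖ ^ 2 := by
  set g : ℝ → ℝ := fun t => G (PK x + t • gF x) with hg
  have hderiv : ∀ t ∈ Set.Icc (0 : ℝ) 1,
      HasDerivWithinAt g (inner ℝ (gG (PK x + t • gF x)) (gF x)) (Set.Icc 0 1) t := by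
    intro t ht
    have hp : HasDerivAt (fun t : ℝ => PK x + t • gF x) (gF x) t := by
      simpa using ((hasDerivAt_id t).smul_const (gF x)).const_add (PK x)
    exact (((hgG t ht).comp_hasDerivAt t hp).hasDerivWithinAt)
  have hbd : ∀ t ∈ Set.Icc (0 : ℝ) 1,
      ‖(inner ℝ (gG (PK x + t • gF x)) (gF x) : ℝ)‖ ≤ C * ‖gF x‖ ^ 2 := by
    intro t ht
    calc ‖(inner ℝ (gG (PK x + t • gF x)) (gF x) : ℝ)‖
        ≤ ‖gG (PK x + t • gF x)‖ * ‖gF x‖ := norm_inner_le_norm _ _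
      _ ≤ (C * ‖gF x‖) * ‖gF x‖ :=
          mul_le_mul_of_nonneg_right (hbound t ht) (norm_nonneg _)
      _ = C * ‖gF x‖ ^ 2 := by ring
  have key : ‖g 1 - g 0‖ ≤ C * ‖gF x‖ ^ 2 * ‖(1 : ℝ) - 0‖ := by
    refine Convex.norm_image_sub_le_of_norm_hasDerivWithin_le hderiv hbd (convex_Icc 0 1) ?_ ?_
    · exact Set.mem_Icc.mpr ⟨le_refl 0, zero_le_one⟩
    · exact Set.mem_Icc.mpr ⟨zero_le_one, le_refl 1⟩
  have h1 : g 1 = F x := by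
    have := hGF 1 (Set.mem_Icc.mpr ⟨zero_le_one, le_refl 1⟩)
    simp only [hg, one_smul] at this ⊢
    rw [this, hΦ]
  have h0 : g 0 = G (PK x) := by simp [hg]
  rw [h1, h0] at key
  simpa [abs_sub_comm] using key
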